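/- Let f be a polynomial of degree d of the form f(z) = z + a₂z² + ⋯ + a_d z^d with a_d = 1/d that is injective on the open unit disc. Then f has d - 1 critical points counted with multiplicity, all lying on the unit circle. -/

import Mathlib

open Complex Finset

open Filter Topology Polynomial

/-- An analytic function injective on the unit ball, not locally constant at `w`,
has nonvanishing derivative at `w ∈ ball 0 1`. -/
lemma aux_deriv_ne_zero {f : ℂ → ℂ} (han : ∀ z, AnalyticAt ℂ f z)
    (hinj : Set.InjOn f (Metric.ball (0 : ℂ) 1)) {w : ℂ} (hw : w ∈ Metric.ball (0 : ℂ) 1)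
    (hnc : ¬ ∀ᶠ z in 𝓝 w, f z = f w) : deriv f w ≠ 0 := by
  intro hder
  set F : ℂ → ℂ := fun z => f z - f w with hFdef
  have hFa : AnalyticAt ℂ F w := (han w).sub analyticAt_const
  have hFne : ¬ ∀ᶠ z in 𝓝 w, F z = 0 := by
    simpa [hFdef, sub_eq_zero] using hnc
  have hord : analyticOrderAt F w ≠ ⊤ := fun h => hFne (analyticOrderAt_eq_top.1 h)
  lift analyticOrderAt F w to ℕ using hord with n hn
  obtain ⟨g, hg, hgw, hev⟩ := (hFa.analyticOrderAt_eq_natCast (n := n)).1 hn.symm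
  -- n ≥ 2
  have hn0 : n ≠ 0 := by
    rintro rfl
    have h0 := hev.self_of_nhds
    simp only [pow_zero, one_smul] at h0
    have hFw : F w = 0 := sub_self (f w)
    rw [hFw] at h0
    exact hgw h0.symm
  have hn1 : n ≠ 1 := by
    rintro rfl
    have hF1 : F =ᶠ[𝓝 w] fun z => (z - w) * g z := by
      filter_upwards [hev] with z hz; simpa using hz
    have hd1 : HasDerivAt (fun z => (z - w) * g z) (1 * g w + (w - w) * deriv g w) w :=
      ((hasDerivAt_id w).sub_const w).mul hg.differentiableAt.hasDerivAt
    have : deriv F w = g w := by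
      rw [hF1.deriv_eq, hd1.deriv]; ring
    have hdF : deriv F w = deriv f w := by
      exact deriv_sub_const (f w)
    rw [hdF, hder] at this
    exact hgw this.symm
  have hn2 : 2 ≤ n := by omega
  have hnC : (n : ℂ) ≠ 0 := Nat.cast_ne_zero.2 hn0
  obtain ⟨u, hu⟩ := IsAlgClosed.exists_pow_nat_eq (g w) (by omega : 0 < n)
  have hu0 : u ≠ 0 := by
    rintro rfl; rw [zero_pow hn0] at hu; exact hgw hu.symm
  set ψ : ℂ → ℂ := fun z => u * Complex.exp (Complex.log (g z / g w) / n) with hψdef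
  set φ : ℂ → ℂ := fun z => (z - w) * ψ z with hφdef
  have hψa : AnalyticAt ℂ ψ w := by
    apply analyticAt_const.mul
    apply AnalyticAt.cexp
    apply AnalyticAt.div _ analyticAt_const hnC
    apply AnalyticAt.clog (hg.div analyticAt_const hgw)
    simp [div_self hgw, Complex.one_mem_slitPlane]
  have hψw : ψ w = u := by
    simp [hψdef, div_self hgw, Complex.log_one]
  have hφa : AnalyticAt ℂ φ w := ((analyticAt_id.sub analyticAt_const)).mul hψa
  have hφw : φ w = 0 := by simp [hφdef]
  have hgz : ∀ᶠ z in 𝓝 w, g z ≠ 0 := hg.continuousAt.eventually_ne hgw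
  have hpow : ∀ᶠ z in 𝓝 w, φ z ^ n = F z := by
    filter_upwards [hgz, hev] with z hz he
    have h1 : ψ z ^ n = g z := by
      have : Complex.exp (Complex.log (g z / g w) / n) ^ n
          = g z / g w := by
        rw [← Complex.exp_nat_mul, mul_div_cancel₀ _ hnC, Complex.exp_log (div_ne_zero hz hgw)]
      simp only [hψdef, mul_pow, hu, this]
      field_simp
    calc φ z ^ n = ((z - w) * ψ z) ^ n := rfl
    _ = (z - w) ^ n * ψ z ^ n := mul_pow _ _ _
    _ = (z - w) ^ n * g z := by rw [h1]
    _ = F z := by rw [he]; simp [smul_eq_mul]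
  have hφd : HasDerivAt φ (1 * ψ w + (w - w) * deriv ψ w) w :=
    ((hasDerivAt_id w).sub_const w).mul hψa.differentiableAt.hasDerivAt
  have hφderiv : deriv φ w = u := by
    rw [hφd.deriv, hψw]; ring
  rcases hφa.eventually_constant_or_nhds_le_map_nhds with hc | hm
  · have : deriv φ w = 0 := by
      have : φ =ᶠ[𝓝 w] fun _ => φ w := hc
      rw [this.deriv_eq]; simp
    rw [hφderiv] at this; exact hu0 this
  · rw [hφw] at hm
    set S : Set ℂ := {z | φ z ^ n = F z} ∩ Metric.ball (0 : ℂ) 1 with hSdef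
    have hS : S ∈ 𝓝 w := Filter.inter_mem hpow (Metric.isOpen_ball.mem_nhds hw)
    have himg : φ '' S ∈ 𝓝 (0 : ℂ) := hm (Filter.image_mem_map hS)
    obtain ⟨ε, hε, hball⟩ := Metric.mem_nhds_iff.1 himg
    set ζ : ℂ := Complex.exp (2 * Real.pi * Complex.I / n) with hζdef
    have hprim : IsPrimitiveRoot ζ n := Complex.isPrimitiveRoot_exp n hn0
    have hζn : ζ ^ n = 1 := hprim.pow_eq_one
    have hζ1 : ζ ≠ 1 := hprim.ne_one (by omega)
    have hζabs : ‖ζ‖ = 1 := Complex.norm_eq_one_of_pow_eq_one hζn hn0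
    set v : ℂ := ((ε / 2 : ℝ) : ℂ) with hvdef
    have hv0 : v ≠ 0 := by
      simp only [hvdef, ne_eq, Complex.ofReal_eq_zero]
      positivity
    have hvabs : ‖v‖ = ε / 2 := by
      rw [hvdef, Complex.norm_real, Real.norm_eq_abs, abs_of_pos (by positivity)]
    have hvmem : v ∈ Metric.ball (0 : ℂ) ε := by
      rw [Metric.mem_ball, dist_zero_right, hvabs]; linarith
    have hζvmem : ζ * v ∈ Metric.ball (0 : ℂ) ε := by
      rw [Metric.mem_ball, dist_zero_right, norm_mul, show ‖ζ‖ = 1 from hζabs, hvabs]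
      linarith
    obtain ⟨z₁, hz₁S, hz₁⟩ := hball hvmem
    obtain ⟨z₂, hz₂S, hz₂⟩ := hball hζvmem
    have hfz : f z₁ = f z₂ := by
      have e1 : F z₁ = v ^ n := by rw [← hz₁S.1, hz₁]
      have e2 : F z₂ = v ^ n := by
        rw [← hz₂S.1, hz₂, mul_pow, hζn, one_mul]
      have : F z₁ = F z₂ := e1.trans e2.symm
      exact sub_left_inj.mp this
    have hz12 : z₁ = z₂ := hinj hz₁S.2 hz₂S.2 hfz
    rw [hz12, hz₂] at hz₁
    exact hζ1 (mul_right_cancel₀ hv0 (by rw [one_mul]; exact hz₁))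

lemma one_le_multiset_prod {s : Multiset ℝ} (h : ∀ x ∈ s, 1 ≤ x) : 1 ≤ s.prod := by
  induction s using Multiset.induction with
  | empty => simp
  | cons a s ih =>
    rw [Multiset.prod_cons]
    have ha := h a (Multiset.mem_cons_self a s)
    have hs := ih (fun x hx => h x (Multiset.mem_cons_of_mem hx))
    nlinarith

/-- Let `f(z) = z + a₂z² + ⋯ + a_d z^d` with `a_d = 1/d` be injective on the open unit disc.
Then `f` has `d - 1` critical points counted with multiplicity, all lying on the unit
circle: `f'` factors as `f'(z) = ∏_{i < d-1} (z - rᵢ)` with every `|rᵢ| = 1`. -/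
theorem stmt_17 (d : ℕ) (hd : 2 ≤ d) (a : ℕ → ℂ) (had : a d = 1 / d)
    (f : ℂ → ℂ) (hf : ∀ z : ℂ, f z = z + ∑ k ∈ Finset.Icc 2 d, a k * z ^ k)
    (hinj : Set.InjOn f (Metric.ball (0 : ℂ) 1)) :
    ∃ r : Fin (d - 1) → ℂ, (∀ i, ‖r i‖ = 1) ∧
      ∀ z : ℂ, deriv f z = ∏ i, (z - r i) := by
  have hdC : (d : ℂ) ≠ 0 := Nat.cast_ne_zero.2 (by omega)
  have had0 : a d ≠ 0 := by rw [had]; exact one_div_ne_zero hdC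
  -- the polynomial F with f = eval F
  set F : ℂ[X] := X + ∑ k ∈ Finset.Icc 2 d, C (a k) * X ^ k with hFdef
  have hfF : ∀ z, f z = F.eval z := by
    intro z
    rw [hf, hFdef]
    simp [eval_finset_sum]
  have hffun : f = fun z => F.eval z := funext hfF
  -- analyticity of f
  have han : ∀ z, AnalyticAt ℂ f z := by
    intro z
    have heq : f = fun z : ℂ => z + ∑ k ∈ Finset.Icc 2 d, a k * z ^ k := funext hf
    rw [heq]
    exact analyticAt_id.add (Finset.analyticAt_fun_sum _
      (fun k _ => analyticAt_const.mul (analyticAt_id.pow k)))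
  -- derivative
  have hderiv : ∀ z, deriv f z = F.derivative.eval z := by
    intro z; rw [hffun, Polynomial.deriv]
  set P : ℂ[X] := F.derivative with hPdef
  -- coefficients of F
  have hFd : F.coeff d = a d := by
    rw [hFdef]
    rw [coeff_add, finset_sum_coeff]
    simp only [coeff_C_mul, coeff_X_pow, coeff_X]
    rw [if_neg (by omega : ¬ (1 : ℕ) = d), zero_add]
    simp only [mul_ite, mul_one, mul_zero]
    rw [Finset.sum_ite_eq, if_pos (Finset.mem_Icc.2 ⟨hd, le_refl d⟩)]
  have hF1 : F.coeff 1 = 1 := by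
    rw [hFdef, coeff_add, finset_sum_coeff]
    simp only [coeff_C_mul, coeff_X_pow, coeff_X]
    rw [if_pos trivial]
    simp only [mul_ite, mul_one, mul_zero]
    rw [Finset.sum_ite_eq, if_neg (by simp : (1:ℕ) ∉ Finset.Icc 2 d), add_zero]
  have hFdegle : F.natDegree ≤ d := by
    rw [hFdef]
    apply le_trans (natDegree_add_le _ _)
    simp only [natDegree_X, max_le_iff]
    refine ⟨by omega, ?_⟩
    apply Polynomial.natDegree_sum_le_of_forall_le
    intro k hk
    apply le_trans (natDegree_C_mul_le _ _)
    simpa using (Finset.mem_Icc.1 hk).2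
  have hFdeg : F.natDegree = d :=
    le_antisymm hFdegle (le_natDegree_of_ne_zero (hFd ▸ had0))
  -- coefficients of P
  have hP0 : P.coeff 0 = 1 := by
    rw [hPdef, coeff_derivative, hF1]; norm_num
  have hPtop : P.coeff (d - 1) = 1 := by
    rw [hPdef, coeff_derivative, show d - 1 + 1 = d by omega, hFd, had]
    have : ((d - 1 : ℕ) : ℂ) + 1 = (d : ℂ) := by
      push_cast [Nat.cast_sub (by omega : 1 ≤ d)]; ring
    rw [this]
    field_simp
  have hPdeg : P.natDegree = d - 1 := by
    refine le_antisymm ?_ (le_natDegree_of_ne_zero (by rw [hPtop]; exact one_ne_zero))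
    rw [hPdef]
    exact le_trans (natDegree_derivative_le F) (by omega)
  have hPmonic : P.Monic := by
    rw [Monic, leadingCoeff, hPdeg, hPtop]
  have hPsplit : Splits P := IsAlgClosed.splits P
  have hcard : P.roots.card = d - 1 := by
    rw [(splits_iff_card_roots).1 hPsplit, hPdeg]
  -- all roots have modulus ≥ 1
  have hge : ∀ x ∈ P.roots, 1 ≤ ‖x‖ := by
    intro x hx
    by_contra hlt
    push_neg at hlt
    have hxball : x ∈ Metric.ball (0 : ℂ) 1 := by
      rwa [Metric.mem_ball, dist_zero_right]
    have hxroot : P.eval x = 0 := (mem_roots'.1 hx).2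
    have hnc : ¬ ∀ᶠ z in nhds x, f z = f x := by
      intro hc
      have hdz : ∀ᶠ z in nhds x, deriv f z = 0 := by
        have : deriv f =ᶠ[nhds x] deriv (fun _ => f x) := Filter.EventuallyEq.deriv hc
        filter_upwards [this] with z hz
        rw [hz, deriv_const]
      have hroots : {z : ℂ | P.IsRoot z}.Infinite := by
        apply Set.Infinite.mono ?_ (infinite_of_mem_nhds x hdz)
        intro z hz
        have : deriv f z = 0 := hz
        rwa [hderiv] at this
      exact hPmonic.ne_zero (P.eq_zero_of_infinite_isRoot hroots)
    have := aux_deriv_ne_zero han hinj hxball hnc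
    rw [hderiv, hxroot] at this
    exact this rfl
  -- product of moduli is 1
  have hprod : (P.roots.map (‖·‖)).prod = 1 := by
    have h1 : P.coeff 0 = (-1) ^ P.natDegree * P.roots.prod :=
      hPsplit.coeff_zero_eq_prod_roots_of_monic hPmonic
    have h2 : ‖P.roots.prod‖ = 1 := by
      have := congrArg norm h1
      rw [hP0, norm_mul, norm_pow, norm_neg, norm_one, one_pow, one_mul] at this
      exact this.symm
    rw [← h2]
    exact (map_multiset_prod (normHom : ℂ →*₀ ℝ) P.roots).symm
  -- hence all roots have modulus exactly 1
  have habs1 : ∀ x ∈ P.roots, ‖x‖ = 1 := by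
    intro x hx
    have hmem : ‖x‖ ∈ P.roots.map (‖·‖) := Multiset.mem_map_of_mem _ hx
    have hsplit2 : (P.roots.map (‖·‖)).prod
        = ‖x‖ * ((P.roots.map (‖·‖)).erase (‖x‖)).prod := by
      rw [← Multiset.prod_cons, Multiset.cons_erase hmem]
    have hrest : 1 ≤ ((P.roots.map (‖·‖)).erase (‖x‖)).prod := by
      apply one_le_multiset_prod
      intro y hy
      obtain ⟨x', hx', rfl⟩ := Multiset.mem_map.1 (Multiset.mem_of_mem_erase hy)
      exact hge x' hx'
    have h1 := hge x hx
    nlinarith [hprod, hsplit2]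
  -- finish: enumerate the roots
  set l : List ℂ := P.roots.toList with hldef
  have hlen : l.length = d - 1 := by rw [hldef, Multiset.length_toList, hcard]
  refine ⟨fun i => l.get (Fin.cast hlen.symm i), ?_, ?_⟩
  · intro i
    apply habs1
    rw [← Multiset.mem_toList]
    exact l.get_mem _
  · intro z
    have hPfact : P = (P.roots.map fun a => X - C a).prod :=
      hPsplit.eq_prod_roots_of_monic hPmonic
    rw [hderiv, hPfact]
    rw [eval_multiset_prod, Multiset.map_map]
    have hcoe : P.roots = (l : Multiset ℂ) := (Multiset.coe_toList _).symm
    rw [hcoe]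
    rw [Multiset.map_coe, Multiset.prod_coe]
    have hmapeval : (eval z ∘ fun a : ℂ => X - C a) = fun a => z - a := by
      funext a; simp
    rw [hmapeval]
    have : l.map (fun a => z - a) = List.ofFn (fun i : Fin l.length => z - l.get i) := by
      conv_lhs => rw [← List.ofFn_get l]
      rw [List.map_ofFn]
      rfl
    rw [this, List.prod_ofFn]
    exact Fintype.prod_equiv (finCongr hlen) _ _ (fun i => rfl)
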